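/- Let p be a prime, n ≥ 1 a natural number, and k a separably closed field of characteristic p. Then the map F − Id on the p-typical Witt vectors of length n over k is surjective: for every a ∈ W_n(k) there exists x ∈ W_n(k) with F(x) − x = a, where F is the functorial map induced by the Frobenius endomorphism of k (raising each Witt coefficient to the p-th power). -/

import Mathlib

open WittVector Polynomial

local notation "𝕎" => WittVector

section aux

variable {p : ℕ} [hp : Fact p.Prime] {R : Type*} [CommRing R]

theorem vIter_coeff_lt (m : ℕ) (y : 𝕎 p R) {i : ℕ} (hi : i < m) :
    (WittVector.verschiebung^[m] y).coeff i = 0 := by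
  induction m generalizing i y with
  | zero => omega
  | succ m ih =>
    rw [Function.iterate_succ_apply']
    cases i with
    | zero => exact verschiebung_coeff_zero _
    | succ i => rw [verschiebung_coeff_succ]; exact ih y (by omega)

theorem vIter_coeff_add (m : ℕ) (y : 𝕎 p R) (i : ℕ) :
    (WittVector.verschiebung^[m] y).coeff (i + m) = y.coeff i := by
  induction m generalizing i y with
  | zero => rfl
  | succ m ih =>
    rw [Function.iterate_succ_apply', show i + (m + 1) = (i + m) + 1 from rfl,
      verschiebung_coeff_succ, ih]

theorem vIter_add (m : ℕ) (a b : 𝕎 p R) :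
    WittVector.verschiebung^[m] (a + b)
      = WittVector.verschiebung^[m] a + WittVector.verschiebung^[m] b := by
  induction m with
  | zero => rfl
  | succ m ih => rw [Function.iterate_succ_apply', ih, Function.iterate_succ_apply',
      Function.iterate_succ_apply', map_add]

theorem vIter_sub (m : ℕ) (a b : 𝕎 p R) :
    WittVector.verschiebung^[m] (a - b)
      = WittVector.verschiebung^[m] a - WittVector.verschiebung^[m] b := by
  induction m with
  | zero => rfl
  | succ m ih => rw [Function.iterate_succ_apply', ih, Function.iterate_succ_apply',
      Function.iterate_succ_apply', map_sub]

theorem map_vIter {S : Type*} [CommRing S] (f : R →+* S) (m : ℕ) (a : 𝕎 p R) :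
    WittVector.map f (WittVector.verschiebung^[m] a)
      = WittVector.verschiebung^[m] (WittVector.map f a) := by
  induction m with
  | zero => rfl
  | succ m ih => rw [Function.iterate_succ_apply', map_verschiebung, ih,
      Function.iterate_succ_apply']

theorem exists_vIter (m : ℕ) (x : 𝕎 p R) (h : ∀ i < m, x.coeff i = 0) :
    ∃ y : 𝕎 p R, WittVector.verschiebung^[m] y = x ∧ y.coeff 0 = x.coeff m := by
  refine ⟨WittVector.mk p fun j => x.coeff (j + m), ?_, ?_⟩
  · ext i
    rcases lt_or_ge i m with hi | hi
    · rw [vIter_coeff_lt m _ hi, h i hi]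
    · obtain ⟨j, rfl⟩ : ∃ j, i = j + m := ⟨i - m, by omega⟩
      rw [vIter_coeff_add, WittVector.coeff_mk]
  · rw [WittVector.coeff_mk, zero_add]

theorem coeff_init (m : ℕ) (x : 𝕎 p R) (i : ℕ) :
    (WittVector.init m x).coeff i = if i < m then x.coeff i else 0 := by
  simp [WittVector.init, WittVector.select, WittVector.coeff_mk]

theorem init_eq_of_coeff (m : ℕ) (x y : 𝕎 p R) (h : ∀ i < m, x.coeff i = y.coeff i) :
    WittVector.init m x = WittVector.init m y := by
  ext i
  rw [coeff_init, coeff_init]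
  split_ifs with hi
  · exact h i hi
  · rfl

theorem init_eq_zero (m : ℕ) (x : 𝕎 p R) (h : ∀ i < m, x.coeff i = 0) :
    WittVector.init m x = 0 := by
  ext i
  rw [coeff_init, zero_coeff]
  split_ifs with hi
  · exact h i hi
  · rfl

/-- adding a vector supported in degrees > n doesn't change coefficients ≤ n -/
theorem coeff_add_of_hi (m : ℕ) (a z : 𝕎 p R) (hz : ∀ i < m, z.coeff i = 0) :
    ∀ i < m, (a + z).coeff i = a.coeff i := by
  intro i hi
  have h1 : WittVector.init m (a + z) = WittVector.init m a := by
    rw [WittVector.init_add, init_eq_zero m z hz, add_zero, WittVector.init_init]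
  have := congrArg (fun v => WittVector.coeff v i) h1
  simpa only [coeff_init, if_pos hi] using this

end aux

section field

variable (p : ℕ) [hp : Fact p.Prime] (k : Type*) [Field k] [IsSepClosed k] [CharP k p]

theorem artin_schreier_root (δ : k) : ∃ c : k, c ^ p - c = -δ := by
  have hp2 : 2 ≤ p := hp.out.two_le
  set f : k[X] := X ^ p - X + C δ with hf
  have hdeg : f.degree = p := by
    have h1 : (X ^ p : k[X]).degree = p := degree_X_pow p
    have h2 : (-X + C δ : k[X]).degree < (X ^ p : k[X]).degree := by
      rw [h1]
      refine lt_of_le_of_lt (degree_add_le _ _) ?_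
      rw [max_lt_iff]
      constructor
      · rw [degree_neg, degree_X]
        exact_mod_cast by omega
      · exact lt_of_le_of_lt (degree_C_le) (by exact_mod_cast by omega)
    calc f.degree = (X ^ p + (-X + C δ)).degree := by rw [hf, sub_eq_add_neg, add_assoc]
      _ = p := by rw [degree_add_eq_left_of_degree_lt h2, h1]
  have hder : derivative f = -1 := by
    rw [hf]
    simp only [derivative_add, derivative_sub, derivative_X_pow, derivative_X, derivative_C]
    rw [CharP.cast_eq_zero k p]
    simp
  have hsep : f.Separable := by
    rw [Polynomial.Separable, hder]
    exact (isCoprime_one_right).neg_right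
  obtain ⟨c, hc⟩ := IsSepClosed.exists_root f (by rw [hdeg]; exact_mod_cast by omega) hsep
  refine ⟨c, ?_⟩
  have := hc
  rw [IsRoot.def, hf] at this
  simp only [eval_add, eval_sub, eval_pow, eval_X, eval_C] at this
  linear_combination this

theorem main_surj (n : ℕ) (a : 𝕎 p k) :
    ∃ x : 𝕎 p k, ∀ i < n,
      (WittVector.map (frobenius k p) x - x).coeff i = a.coeff i := by
  induction n with
  | zero => exact ⟨0, fun i hi => absurd hi (Nat.not_lt_zero i)⟩
  | succ n ih =>
    obtain ⟨x, hx⟩ := ih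
    set φ := frobenius k p
    set d : 𝕎 p k := WittVector.map φ x - x - a with hd_def
    have hd : ∀ i < n, d.coeff i = 0 := by
      intro i hi
      have h1 : WittVector.init n d = 0 := by
        rw [hd_def, WittVector.init_sub,
          init_eq_of_coeff n (WittVector.map φ x - x) a hx, ← WittVector.init_sub,
          sub_self]
        exact init_eq_zero n 0 (fun i _ => zero_coeff p k i)
      have := congrArg (fun v => WittVector.coeff v i) h1
      simpa only [coeff_init, if_pos hi, zero_coeff] using this
    obtain ⟨c, hc⟩ := artin_schreier_root p k (d.coeff n)
    set w : 𝕎 p k := WittVector.mk p fun j => if j = 0 then c else 0 with hw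
    set e : 𝕎 p k := WittVector.map φ w - w with he_def
    have hw0 : w.coeff 0 = c := rfl
    have hneg : (-w).coeff 0 = -(w.coeff 0) := by
      have h0 : ((-w) + w).coeff 0 = 0 := by rw [neg_add_cancel, zero_coeff]
      rw [add_coeff_zero] at h0
      linear_combination h0
    have he0 : e.coeff 0 = c ^ p - c := by
      rw [he_def, sub_eq_add_neg, add_coeff_zero, map_coeff, hneg, hw0]
      rw [frobenius_def]
      ring
    set z : 𝕎 p k := d + WittVector.verschiebung^[n] e with hz_def
    obtain ⟨d₁, hd₁, hd₁0⟩ := exists_vIter n d hd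
    have hz : ∀ i < n + 1, z.coeff i = 0 := by
      have hzv : z = WittVector.verschiebung^[n] (d₁ + e) := by
        rw [hz_def, vIter_add, hd₁]
      intro i hi
      rcases lt_or_ge i n with h | h
      · rw [hzv]; exact vIter_coeff_lt n _ h
      · have hin : i = n := by omega
        have hva := vIter_coeff_add n (d₁ + e) 0
        rw [zero_add] at hva
        rw [hzv, hin, hva, add_coeff_zero, hd₁0, he0, hc]
        ring
    refine ⟨x + WittVector.verschiebung^[n] w, fun i hi => ?_⟩
    have key : WittVector.map φ (x + WittVector.verschiebung^[n] w)
        - (x + WittVector.verschiebung^[n] w) = a + z := by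
      have hve : WittVector.verschiebung^[n] e
          = WittVector.verschiebung^[n] (WittVector.map φ w)
            - WittVector.verschiebung^[n] w := by
        rw [he_def, vIter_sub]
      rw [map_add, map_vIter, hz_def, hd_def, hve]
      ring
    rw [key]
    exact coeff_add_of_hi (n + 1) a z hz i hi

end field

/-- The functorial map on truncated Witt vectors induced by a ring homomorphism,
applied coefficientwise. -/
def twMap {p n : ℕ} {A B : Type*} [CommRing A] [CommRing B] (f : A →+* B)
    (x : TruncatedWittVector p n A) : TruncatedWittVector p n B :=
  TruncatedWittVector.mk p fun i => f (x.coeff i)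

/-- Surjectivity of `F − Id` on length-`n` Witt vectors over a separably closed field of
characteristic `p` (exactness of the Artin–Schreier–Witt sequence). -/
theorem frobenius_sub_id_surjective
    (p : ℕ) [hp : Fact p.Prime] (n : ℕ) (hn : 1 ≤ n)
    (k : Type*) [Field k] [IsSepClosed k] [CharP k p]
    (a : TruncatedWittVector p n k) :
    ∃ x : TruncatedWittVector p n k, twMap (frobenius k p) x - x = a := by
  set φ := frobenius k p
  obtain ⟨x, hx⟩ := main_surj p k n a.out
  refine ⟨WittVector.truncate n x, ?_⟩
  have h1 : twMap φ (WittVector.truncate n x)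
      = WittVector.truncate n (WittVector.map φ x) := by
    ext i
    rw [twMap, TruncatedWittVector.coeff_mk, WittVector.coeff_truncate,
      WittVector.coeff_truncate, map_coeff]
  rw [h1, ← map_sub]
  ext i
  rw [WittVector.coeff_truncate, hx i i.2, TruncatedWittVector.coeff_out]
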